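/- Let g : ℝ → ℝ satisfy g(0) = 0, g'(t) = (1 + 2 g(t)^2)^(-1/2) for t ≥ 0, extended oddly. Then |g(t)| ≤ 2^(1/4) |t|^(1/2) for all t ∈ ℝ. -/

import Mathlib

theorem stmt_3 (g : ℝ → ℝ) (hg0 : g 0 = 0)
    (hgd : ∀ t : ℝ, 0 ≤ t → HasDerivAt g (1 / Real.sqrt (1 + 2 * g t ^ 2)) t)
    (hodd : ∀ t : ℝ, g (-t) = - g t) :
    ∀ t : ℝ, |g t| ≤ (2 : ℝ) ^ ((1 : ℝ) / 4) * |t| ^ ((1 : ℝ) / 2) := by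
  have key : ∀ x : ℝ, 2 * x * (1 / Real.sqrt (1 + 2 * x ^ 2)) ≤ Real.sqrt 2 := by
    intro x
    have hS : 0 < Real.sqrt (1 + 2 * x ^ 2) := Real.sqrt_pos.mpr (by positivity)
    have hkey : 2 * x ≤ Real.sqrt 2 * Real.sqrt (1 + 2 * x ^ 2) := by
      rcases le_or_gt x 0 with h | h
      · have : 0 ≤ Real.sqrt 2 * Real.sqrt (1 + 2 * x ^ 2) := by positivity
        linarith
      · have h1 : Real.sqrt 2 * x ≤ Real.sqrt (1 + 2 * x ^ 2) := by
          have : Real.sqrt 2 * x = Real.sqrt (2 * x ^ 2) := by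
            rw [Real.sqrt_mul (by norm_num), Real.sqrt_sq h.le]
          rw [this]
          exact Real.sqrt_le_sqrt (by linarith)
        have h2 : Real.sqrt 2 * (Real.sqrt 2 * x) ≤ Real.sqrt 2 * Real.sqrt (1 + 2 * x ^ 2) :=
          mul_le_mul_of_nonneg_left h1 (Real.sqrt_nonneg 2)
        have h3 : Real.sqrt 2 * Real.sqrt 2 = 2 := Real.mul_self_sqrt (by norm_num)
        nlinarith
    rw [mul_one_div, div_le_iff₀ hS]
    linarith
  have main : ∀ t : ℝ, 0 ≤ t → g t ^ 2 ≤ Real.sqrt 2 * t := by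
    intro t ht
    set F : ℝ → ℝ := fun s => Real.sqrt 2 * s - g s ^ 2 with hFdef
    have hF : ∀ s, 0 ≤ s →
        HasDerivAt F (Real.sqrt 2 - 2 * g s * (1 / Real.sqrt (1 + 2 * g s ^ 2))) s := by
      intro s hs
      have h1 := (hgd s hs).pow 2
      have h2 := ((hasDerivAt_id s).const_mul (Real.sqrt 2)).sub h1
      refine h2.congr_deriv ?_
      norm_num
    have mono : MonotoneOn F (Set.Ici 0) := by
      apply monotoneOn_of_deriv_nonneg (convex_Ici 0)
      · exact fun s hs => (hF s hs).continuousAt.continuousWithinAt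
      · intro s hs
        rw [interior_Ici] at hs
        exact (hF s hs.le).differentiableAt.differentiableWithinAt
      · intro s hs
        rw [interior_Ici] at hs
        rw [(hF s hs.le).deriv]
        have := key (g s)
        linarith
    have h0 : F 0 ≤ F t := mono Set.self_mem_Ici (Set.mem_Ici.mpr ht) ht
    simp only [hFdef, hg0, mul_zero, ne_eq, OfNat.ofNat_ne_zero, not_false_eq_true,
      zero_pow, sub_zero] at h0
    linarith
  have habs : ∀ t : ℝ, 0 ≤ t → |g t| ≤ (2 : ℝ) ^ ((1 : ℝ) / 4) * |t| ^ ((1 : ℝ) / 2) := by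
    intro t ht
    have h1 : |g t| ≤ Real.sqrt (Real.sqrt 2 * t) := by
      rw [show |g t| = Real.sqrt (g t ^ 2) by rw [Real.sqrt_sq_eq_abs]]
      exact Real.sqrt_le_sqrt (main t ht)
    have h2 : Real.sqrt (Real.sqrt 2 * t)
        = (2 : ℝ) ^ ((1 : ℝ) / 4) * |t| ^ ((1 : ℝ) / 2) := by
      rw [Real.sqrt_mul (Real.sqrt_nonneg 2)]
      congr 1
      · rw [Real.sqrt_eq_rpow, Real.sqrt_eq_rpow, ← Real.rpow_mul (by norm_num)]
        norm_num
      · rw [Real.sqrt_eq_rpow, abs_of_nonneg ht]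
    linarith [h2 ▸ h1]
  intro t
  rcases le_or_gt 0 t with ht | ht
  · exact habs t ht
  · have h1 : |g t| = |g (-t)| := by
      rw [show g t = - g (-t) by rw [hodd]; ring]
      rw [abs_neg]
    have h2 : |t| = |-t| := (abs_neg t).symm
    rw [h1, h2]
    exact habs (-t) (by linarith)
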